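/- Let n ≥ 2 and let p_1,…,p_n, q_1,…,q_n, r_1,…,r_n be natural numbers with r_i ≥ 1 for all i. Let M be the 2n×n integer matrix obtained by stacking the diagonal matrix A with A_{ii} = 2^{r_i} on top of the matrix B with B_{ii} = 2^{p_i}, B_{i,i+1} = −2^{q_i} for 1 ≤ i ≤ n−1, B_{n,1} = −2^{q_n}, and all other entries 0. Then the ℤ-submodule of ℤⁿ spanned by the rows of M equals all of ℤⁿ if and only if exactly one of the two sums p_1 + ⋯ + p_n and q_1 + ⋯ + q_n equals 0. -/

import Mathlib

open Fin.NatCast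

/-- The matrix `B` with `B_{ii} = 2^{p_i}`, `B_{i,i+1} = −2^{q_i}` for `1 ≤ i ≤ n−1`,
`B_{n,1} = −2^{q_n}`, and all other entries `0` (indices shifted down by one). -/
def echinusB (n : ℕ) (p q : Fin n → ℕ) : Matrix (Fin n) (Fin n) ℤ :=
  Matrix.of fun i j =>
    if i = j then (2 : ℤ) ^ p i
    else if (i : ℕ) + 1 = (j : ℕ) then -(2 : ℤ) ^ q i
    else if (i : ℕ) = n - 1 ∧ (j : ℕ) = 0 then -(2 : ℤ) ^ q i
    else 0

section Aux

variable {n : ℕ}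

lemma fin_one_ne_zero' [NeZero n] (hn : 2 ≤ n) : (1 : Fin n) ≠ 0 := by
  intro h
  have h2 := congrArg Fin.val h
  rw [Fin.val_one', Fin.val_zero, Nat.mod_eq_of_lt (by omega)] at h2
  omega

lemma fin_succ_ne [NeZero n] (hn : 2 ≤ n) (i : Fin n) : i + 1 ≠ i := by
  intro h
  have h2 : (1 : Fin n) = 0 := by
    have := congrArg (· - i) h
    simpa [add_comm] using this
  exact fin_one_ne_zero' hn h2

lemma fin_val_succ [NeZero n] (hn : 2 ≤ n) (i : Fin n) :
    ((i + 1 : Fin n) : ℕ) = if (i : ℕ) = n - 1 then 0 else (i : ℕ) + 1 := by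
  rw [Fin.val_add, Fin.val_one', Nat.mod_eq_of_lt (show 1 < n by omega)]
  by_cases h : (i : ℕ) = n - 1
  · rw [if_pos h]
    have h2 : (i : ℕ) + 1 = n := by have := i.isLt; omega
    rw [h2, Nat.mod_self]
  · rw [if_neg h, Nat.mod_eq_of_lt (by have := i.isLt; omega)]

lemma echinusB_row [NeZero n] (hn : 2 ≤ n) (p q : Fin n → ℕ) (i : Fin n) :
    echinusB n p q i = (2:ℤ) ^ p i • (Pi.single i (1:ℤ) : Fin n → ℤ)
      - (2:ℤ) ^ q i • (Pi.single (i + 1) (1:ℤ) : Fin n → ℤ) := by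
  have hval := fin_val_succ hn i
  have hne : i + 1 ≠ i := fin_succ_ne hn i
  have hiv : (i : ℕ) < n := i.isLt
  funext j
  by_cases h1 : j = i
  · subst h1
    simp [echinusB, Matrix.of_apply, Pi.single_eq_of_ne (fun h => hne h.symm),
      Pi.single_eq_same]
  · by_cases h2 : j = i + 1
    · subst h2
      have hij : i ≠ i + 1 := fun h => hne h.symm
      simp only [echinusB, Matrix.of_apply, Pi.sub_apply, Pi.smul_apply, Pi.single_eq_same,
        Pi.single_eq_of_ne hne, if_neg hij, smul_eq_mul, mul_one, mul_zero, zero_sub]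
      by_cases hlast : (i : ℕ) = n - 1
      · rw [if_pos hlast] at hval
        rw [if_neg (by omega), if_pos ⟨hlast, hval⟩]
      · rw [if_neg hlast] at hval
        rw [if_pos hval.symm]
    · have hij : i ≠ j := fun h => h1 h.symm
      have hjv : (j : ℕ) < n := j.isLt
      simp only [echinusB, Matrix.of_apply, Pi.sub_apply, Pi.smul_apply,
        Pi.single_eq_of_ne h1, Pi.single_eq_of_ne h2, if_neg hij, smul_eq_mul,
        mul_zero, sub_zero]
      rw [if_neg, if_neg]
      · rintro ⟨ha, hb⟩
        apply h2
        apply Fin.ext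
        rw [hval, if_pos ha, hb]
      · intro h
        apply h2
        apply Fin.ext
        rw [hval, if_neg (by omega)]
        omega

end Aux

section Aux2

variable {n : ℕ}

lemma single_eq_smul (x : Fin n) (c : ℤ) :
    Pi.single x c = c • (Pi.single x (1:ℤ) : Fin n → ℤ) := by
  funext j
  simp [Pi.single_apply, mul_ite]

lemma chain [NeZero n] (hn : 2 ≤ n) (p q : Fin n → ℕ) (S : Submodule ℤ (Fin n → ℤ))
    (hB : ∀ i, echinusB n p q i ∈ S) (i : Fin n) (k : ℕ) :
    (2:ℤ)^(∑ j ∈ Finset.range k, p (i + (j : Fin n))) • Pi.single i (1:ℤ)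
      - (2:ℤ)^(∑ j ∈ Finset.range k, q (i + (j : Fin n))) • Pi.single (i + (k : Fin n)) (1:ℤ)
      ∈ S := by
  induction k with
  | zero => simp
  | succ k ih =>
    have hrow := hB (i + (k : Fin n))
    rw [echinusB_row hn] at hrow
    have hmem := S.add_mem (S.smul_mem ((2:ℤ)^(p (i + (k:Fin n)))) ih)
      (S.smul_mem ((2:ℤ)^(∑ j ∈ Finset.range k, q (i + (j : Fin n)))) hrow)
    have hidx : i + ((k + 1 : ℕ) : Fin n) = i + (k : Fin n) + 1 := by
      rw [Nat.cast_add, Nat.cast_one, add_assoc]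
    rw [Finset.sum_range_succ, Finset.sum_range_succ, hidx, pow_add, pow_add]
    convert hmem using 1
    module

end Aux2

section Fwd

variable {n : ℕ}

lemma sum_cycle [NeZero n] (f : Fin n → ℕ) (i : Fin n) :
    ∑ j ∈ Finset.range n, f (i + (j : Fin n)) = ∑ j, f j := by
  rw [← Fin.sum_univ_eq_sum_range (fun j => f (i + (j : Fin n))) n]
  simp only [Fin.cast_val_eq_self]
  exact Fintype.sum_equiv (Equiv.addLeft i) _ _ (fun j => rfl)

lemma forward_dir (hn : 2 ≤ n) (p q r : Fin n → ℕ)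
    (h : ((∑ i, p i = 0 ∧ ∑ i, q i ≠ 0) ∨ (∑ i, p i ≠ 0 ∧ ∑ i, q i = 0))) :
    Submodule.span ℤ (Set.range fun i =>
        Matrix.fromRows (Matrix.diagonal fun i => (2 : ℤ) ^ r i) (echinusB n p q) i) = ⊤ := by
  haveI : NeZero n := ⟨by omega⟩
  set S := Submodule.span ℤ (Set.range fun i =>
      Matrix.fromRows (Matrix.diagonal fun i => (2 : ℤ) ^ r i) (echinusB n p q) i) with hS
  have hB : ∀ i, echinusB n p q i ∈ S :=
    fun i => Submodule.subset_span ⟨Sum.inr i, rfl⟩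
  have hdiag : ∀ i, (2:ℤ) ^ r i • (Pi.single i (1:ℤ) : Fin n → ℤ) ∈ S := by
    intro i
    have hmem : Matrix.diagonal (fun i => (2 : ℤ) ^ r i) i ∈ S :=
      Submodule.subset_span ⟨Sum.inl i, rfl⟩
    have heq : Matrix.diagonal (fun i => (2 : ℤ) ^ r i) i
        = (2:ℤ) ^ r i • (Pi.single i (1:ℤ) : Fin n → ℤ) := by
      funext j
      by_cases hij : i = j
      · subst hij; simp [Matrix.diagonal_apply_eq]
      · simp [Matrix.diagonal_apply_ne _ hij, Pi.single_eq_of_ne (fun hh => hij hh.symm)]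
    rwa [heq] at hmem
  have key : ∀ i : Fin n, ((2:ℤ) ^ (∑ j, p j) - (2:ℤ) ^ (∑ j, q j))
      • (Pi.single i (1:ℤ) : Fin n → ℤ) ∈ S := by
    intro i
    have hc := chain hn p q S hB i n
    rw [Fin.natCast_self, add_zero, sum_cycle p i, sum_cycle q i, ← sub_smul] at hc
    exact hc
  have hsingle : ∀ i : Fin n, (Pi.single i (1:ℤ) : Fin n → ℤ) ∈ S := by
    intro i
    set x : ℤ := (2:ℤ) ^ (∑ j, p j) - (2:ℤ) ^ (∑ j, q j) with hx
    have hcop : IsCoprime x ((2:ℤ) ^ r i) := by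
      have h2 : IsCoprime x 2 := by
        rcases h with ⟨hp0, hq0⟩ | ⟨hp0, hq0⟩
        · have h1 : IsCoprime x ((2:ℤ) ^ (∑ j, q j)) :=
            ⟨1, 1, by rw [hx, hp0, pow_zero]; ring⟩
          exact (IsCoprime.pow_right_iff (by omega)).mp h1
        · have h1 : IsCoprime x ((2:ℤ) ^ (∑ j, p j)) :=
            ⟨-1, 1, by rw [hx, hq0, pow_zero]; ring⟩
          exact (IsCoprime.pow_right_iff (by omega)).mp h1
      exact h2.pow_right
    obtain ⟨u, v, huv⟩ := hcop
    have hmem := S.add_mem (S.smul_mem u (key i)) (S.smul_mem v (hdiag i))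
    rw [smul_smul, smul_smul, ← add_smul, huv, one_smul] at hmem
    exact hmem
  rw [eq_top_iff]
  rintro x -
  have hx : x = ∑ i, x i • (Pi.single i (1:ℤ) : Fin n → ℤ) := by
    funext j
    rw [Finset.sum_apply]
    simp [Pi.single_apply]
  rw [hx]
  exact Submodule.sum_mem _ (fun i _ => S.smul_mem _ (hsingle i))

end Fwd

section Det

variable {n : ℕ}

lemma perm_eq [NeZero n] (hn : 2 ≤ n) (σ : Equiv.Perm (Fin n))
    (h : ∀ i, σ i = i ∨ σ i = i + 1) :
    σ = 1 ∨ σ = Equiv.addRight (1 : Fin n) := by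
  by_cases hfix : ∃ i, σ i = i
  · left
    obtain ⟨i₁, hi₁⟩ := hfix
    have hstep : ∀ j : Fin n, σ j = j → σ (j - 1) = j - 1 := by
      intro j hj
      rcases h (j - 1) with h' | h'
      · exact h'
      · exfalso
        rw [sub_add_cancel] at h'
        have hinj : j - 1 = j := σ.injective (h'.trans hj.symm)
        have h3 := congrArg (fun z => z - j) hinj
        simp only [sub_sub_cancel_left, sub_self] at h3
        exact fin_one_ne_zero' hn (neg_eq_zero.mp h3)
    have hiter : ∀ k : ℕ, σ (i₁ - (k : Fin n)) = i₁ - (k : Fin n) := by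
      intro k
      induction k with
      | zero => simpa using hi₁
      | succ k ih =>
        have := hstep _ ih
        have hcast : ((k + 1 : ℕ) : Fin n) = (k : Fin n) + 1 := by push_cast; ring
        rw [hcast, ← sub_sub]
        exact this
    apply Equiv.ext
    intro j
    have := hiter ((i₁ - j) : Fin n).val
    rwa [Fin.cast_val_eq_self, sub_sub_cancel] at this
  · right
    push_neg at hfix
    apply Equiv.ext
    intro j
    rcases h j with h' | h'
    · exact absurd h' (hfix j)
    · simpa [Equiv.coe_addRight] using h'

lemma prod_ite_eq_ite_forall (f : Fin n → ℕ) :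
    (∏ i, if f i = 0 then (1 : ZMod 2) else 0)
      = if ∀ i, f i = 0 then (1 : ZMod 2) else 0 := by
  by_cases hall : ∀ i, f i = 0
  · rw [if_pos hall]
    apply Finset.prod_eq_one
    intro i _
    rw [if_pos (hall i)]
  · rw [if_neg hall]
    push_neg at hall
    obtain ⟨i, hi⟩ := hall
    exact Finset.prod_eq_zero (Finset.mem_univ i) (by rw [if_neg hi])

lemma det_echinus [NeZero n] (hn : 2 ≤ n) (p q : Fin n → ℕ) :
    ((echinusB n p q).map (fun z : ℤ => (z : ZMod 2))).det
      = (if ∀ i, p i = 0 then (1 : ZMod 2) else 0)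
        + (if ∀ i, q i = 0 then (1 : ZMod 2) else 0) := by
  set C := (echinusB n p q).map (fun z : ℤ => (z : ZMod 2)) with hCdef
  have hne : ∀ i : Fin n, i + 1 ≠ i := fin_succ_ne hn
  have hCd : ∀ i, C i i = if p i = 0 then (1 : ZMod 2) else 0 := by
    intro i
    have : C i i = (((echinusB n p q) i i : ℤ) : ZMod 2) := rfl
    rw [this, echinusB_row hn p q i]
    simp only [Pi.sub_apply, Pi.smul_apply, Pi.single_eq_same,
      Pi.single_eq_of_ne (fun hh => (hne i) hh.symm), smul_eq_mul, mul_one, mul_zero, sub_zero]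
    push_cast
    rw [show (2 : ZMod 2) = 0 by decide, zero_pow_eq]
  have hCs : ∀ i, C i (i + 1) = if q i = 0 then (1 : ZMod 2) else 0 := by
    intro i
    have : C i (i + 1) = (((echinusB n p q) i (i + 1) : ℤ) : ZMod 2) := rfl
    rw [this, echinusB_row hn p q i]
    simp only [Pi.sub_apply, Pi.smul_apply, Pi.single_eq_same,
      Pi.single_eq_of_ne (hne i), smul_eq_mul, mul_one, mul_zero, zero_sub]
    push_cast
    rw [show (2 : ZMod 2) = 0 by decide, zero_pow_eq, CharTwo.neg_eq]
  have hC0 : ∀ i j, j ≠ i → j ≠ i + 1 → C i j = 0 := by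
    intro i j h1 h2
    have : C i j = (((echinusB n p q) i j : ℤ) : ZMod 2) := rfl
    rw [this, echinusB_row hn p q i]
    simp [Pi.single_eq_of_ne h1, Pi.single_eq_of_ne h2]
  have hrot : (1 : Equiv.Perm (Fin n)) ≠ Equiv.addRight (1 : Fin n) := by
    intro hcontra
    have h0 := Equiv.ext_iff.mp hcontra 0
    simp only [Equiv.Perm.coe_one, id_eq, Equiv.coe_addRight, zero_add] at h0
    exact fin_one_ne_zero' hn h0.symm
  rw [← Matrix.det_transpose, Matrix.det_apply]
  have hterm : ∀ σ : Equiv.Perm (Fin n),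
      σ ∈ Finset.univ →
      σ ∉ ({1, Equiv.addRight (1 : Fin n)} : Finset (Equiv.Perm (Fin n))) →
      (Equiv.Perm.sign σ • ∏ i, C.transpose (σ i) i) = 0 := by
    intro σ _ hσ
    simp only [Finset.mem_insert, Finset.mem_singleton] at hσ
    push_neg at hσ
    have hnall : ¬ ∀ i, σ i = i ∨ σ i = i + 1 := by
      intro hall
      rcases perm_eq hn σ hall with h | h
      · exact hσ.1 h
      · exact hσ.2 h
    push_neg at hnall
    obtain ⟨i, hi1, hi2⟩ := hnall
    rw [Finset.prod_eq_zero (Finset.mem_univ i)]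
    · exact smul_zero _
    · rw [Matrix.transpose_apply]
      exact hC0 i (σ i) hi1 hi2
  rw [← Finset.sum_subset (Finset.subset_univ _) hterm, Finset.sum_pair hrot]
  have hterm1 : (Equiv.Perm.sign (1 : Equiv.Perm (Fin n))
      • ∏ i, C.transpose ((1 : Equiv.Perm (Fin n)) i) i)
      = if ∀ i, p i = 0 then (1 : ZMod 2) else 0 := by
    rw [Equiv.Perm.sign_one, one_smul, ← prod_ite_eq_ite_forall p]
    apply Finset.prod_congr rfl
    intro i _
    rw [Matrix.transpose_apply, Equiv.Perm.coe_one, id_eq, hCd i]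
  have hterm2 : (Equiv.Perm.sign (Equiv.addRight (1 : Fin n) : Equiv.Perm (Fin n))
      • ∏ i, C.transpose ((Equiv.addRight (1 : Fin n) : Equiv.Perm (Fin n)) i) i)
      = if ∀ i, q i = 0 then (1 : ZMod 2) else 0 := by
    have hprod : (∏ i, C.transpose ((Equiv.addRight (1 : Fin n) : Equiv.Perm (Fin n)) i) i)
        = if ∀ i, q i = 0 then (1 : ZMod 2) else 0 := by
      rw [← prod_ite_eq_ite_forall q]
      apply Finset.prod_congr rfl
      intro i _
      rw [Matrix.transpose_apply, Equiv.coe_addRight, hCs i]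
    rcases Int.units_eq_one_or (Equiv.Perm.sign (Equiv.addRight (1 : Fin n) : Equiv.Perm (Fin n)))
      with hs | hs
    · rw [hs, one_smul, hprod]
    · rw [hs, hprod]
      rcases ite_eq_or_eq (∀ i, q i = 0) (1 : ZMod 2) 0 with h | h <;> rw [h] <;> decide
  rw [hterm1, hterm2]

end Det

section Conv

variable {n : ℕ}

lemma converse_dir (hn : 2 ≤ n) (p q r : Fin n → ℕ) (hr : ∀ i, 1 ≤ r i)
    (hspan : Submodule.span ℤ (Set.range fun i =>
        Matrix.fromRows (Matrix.diagonal fun i => (2 : ℤ) ^ r i) (echinusB n p q) i) = ⊤) :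
    ((∑ i, p i = 0 ∧ ∑ i, q i ≠ 0) ∨ (∑ i, p i ≠ 0 ∧ ∑ i, q i = 0)) := by
  haveI : NeZero n := ⟨by omega⟩
  have key : ∀ jj : Fin n, ∃ c : (Fin n ⊕ Fin n) → ℤ,
      ∑ s, c s • Matrix.fromRows (Matrix.diagonal fun i => (2:ℤ) ^ r i) (echinusB n p q) s
        = Pi.single jj 1 := by
    intro jj
    have hmem : (Pi.single jj 1 : Fin n → ℤ) ∈ Submodule.span ℤ (Set.range fun i =>
        Matrix.fromRows (Matrix.diagonal fun i => (2 : ℤ) ^ r i) (echinusB n p q) i) := by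
      rw [hspan]; exact Submodule.mem_top
    exact (Submodule.mem_span_range_iff_exists_fun ℤ).mp hmem
  choose c hc using key
  set C := (echinusB n p q).map (fun z : ℤ => (z : ZMod 2)) with hCdef
  set D : Matrix (Fin n) (Fin n) (ZMod 2) :=
    Matrix.of (fun jj i => ((c jj (Sum.inr i) : ℤ) : ZMod 2)) with hDdef
  have hDC : D * C = 1 := by
    ext jj k
    rw [Matrix.mul_apply]
    have hck := congrArg (fun v : Fin n → ℤ => ((v k : ℤ) : ZMod 2)) (hc jj)
    simp only [Finset.sum_apply, Pi.smul_apply, smul_eq_mul, Int.cast_sum, Int.cast_mul]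
      at hck
    rw [Fintype.sum_sum_type] at hck
    have hz : ∀ i : Fin n,
        ((Matrix.fromRows (Matrix.diagonal fun i => (2:ℤ) ^ r i) (echinusB n p q)
          (Sum.inl i) k : ℤ) : ZMod 2) = 0 := by
      intro i
      have : Matrix.fromRows (Matrix.diagonal fun i => (2:ℤ) ^ r i) (echinusB n p q)
          (Sum.inl i) k = Matrix.diagonal (fun i => (2:ℤ) ^ r i) i k := rfl
      rw [this]
      by_cases hik : i = k
      · subst hik
        rw [Matrix.diagonal_apply_eq]
        push_cast
        rw [show (2 : ZMod 2) = 0 by decide, zero_pow (by have := hr i; omega)]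
      · rw [Matrix.diagonal_apply_ne _ hik]
        simp
    have hzero : ∑ i : Fin n, ((c jj (Sum.inl i) : ℤ) : ZMod 2) *
        ((Matrix.fromRows (Matrix.diagonal fun i => (2:ℤ) ^ r i) (echinusB n p q)
          (Sum.inl i) k : ℤ) : ZMod 2) = 0 := by
      apply Finset.sum_eq_zero
      intro i _
      rw [hz i, mul_zero]
    rw [hzero, zero_add] at hck
    have hrows : ∀ i : Fin n,
        ((Matrix.fromRows (Matrix.diagonal fun i => (2:ℤ) ^ r i) (echinusB n p q)
          (Sum.inr i) k : ℤ) : ZMod 2) = C i k := fun i => rfl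
    calc ∑ i, D jj i * C i k
        = ∑ i, ((c jj (Sum.inr i) : ℤ) : ZMod 2) *
            ((Matrix.fromRows (Matrix.diagonal fun i => (2:ℤ) ^ r i) (echinusB n p q)
              (Sum.inr i) k : ℤ) : ZMod 2) := by
          apply Finset.sum_congr rfl
          intro i _
          rw [hrows i]
          rfl
      _ = (((Pi.single jj 1 : Fin n → ℤ) k : ℤ) : ZMod 2) := hck
      _ = (1 : Matrix (Fin n) (Fin n) (ZMod 2)) jj k := by
          by_cases h : jj = k
          · subst h; simp [Matrix.one_apply, Pi.single_eq_same]
          · simp [Matrix.one_apply, h, Pi.single_eq_of_ne (fun hh => h hh.symm)]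
  have hdet : C.det ≠ 0 := by
    intro h0
    have hd := congrArg Matrix.det hDC
    rw [Matrix.det_mul, h0, mul_zero, Matrix.det_one] at hd
    exact zero_ne_one hd
  rw [hCdef, det_echinus hn p q] at hdet
  have hps : (∑ i, p i = 0) ↔ ∀ i, p i = 0 := by
    rw [Finset.sum_eq_zero_iff]
    exact ⟨fun h i => h i (Finset.mem_univ i), fun h i _ => h i⟩
  have hqs : (∑ i, q i = 0) ↔ ∀ i, q i = 0 := by
    rw [Finset.sum_eq_zero_iff]
    exact ⟨fun h i => h i (Finset.mem_univ i), fun h i _ => h i⟩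
  by_cases hp : ∀ i, p i = 0 <;> by_cases hq : ∀ i, q i = 0
  · rw [if_pos hp, if_pos hq] at hdet
    exact absurd (by decide : (1 : ZMod 2) + 1 = 0) hdet
  · exact Or.inl ⟨hps.mpr hp, fun h => hq (hqs.mp h)⟩
  · exact Or.inr ⟨fun h => hp (hps.mp h), hqs.mpr hq⟩
  · rw [if_neg hp, if_neg hq] at hdet
    exact absurd (by decide : (0 : ZMod 2) + 0 = 0) hdet

end Conv

theorem stmt7 (n : ℕ) (hn : 2 ≤ n) (p q r : Fin n → ℕ) (hr : ∀ i, 1 ≤ r i) :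
    Submodule.span ℤ (Set.range fun i =>
        Matrix.fromRows (Matrix.diagonal fun i => (2 : ℤ) ^ r i) (echinusB n p q) i) = ⊤ ↔
      ((∑ i, p i = 0 ∧ ∑ i, q i ≠ 0) ∨ (∑ i, p i ≠ 0 ∧ ∑ i, q i = 0)) :=
  ⟨converse_dir hn p q r hr, forward_dir hn p q r⟩
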